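/- Let T be a tree rooted at r with rooted path decomposition 𝒫, let ℓ = (u,v) be a link, and let Q ∈ 𝒫 be a path of the decomposition for which ℓ is Q-non-rooted. Then the least common ancestor of u and v lies on Q and is not an endpoint of Q. -/

import Mathlib

open SimpleGraph Walk

private lemma walk_unique {V : Type*} {G : SimpleGraph V} (hG : G.IsAcyclic) {x y : V}
    (s t : G.Walk x y) (hs : s.IsPath) (ht : t.IsPath) : s = t :=
  congrArg Subtype.val (hG.path_unique ⟨s, hs⟩ ⟨t, ht⟩)

private lemma junction_of_mem {V : Type*} {G : SimpleGraph V} {x y z : V}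
    {s : G.Walk x y} {t : G.Walk y z} (h : (s.append t).IsPath) {m : V}
    (hms : m ∈ s.support) (hmt : m ∈ t.support) : m = y := by
  by_contra hne
  have hnodup := h.support_nodup
  rw [Walk.support_append, List.nodup_append] at hnodup
  have hmt' : m ∈ t.support.tail := by
    rw [t.support_eq_cons] at hmt
    rcases List.mem_cons.mp hmt with h1 | h1
    · exact absurd h1 hne
    · exact h1
  exact hnodup.2.2 m hms m hmt' rfl

private lemma path_append {V : Type*} {G : SimpleGraph V} {x y z : V}
    {s : G.Walk x y} {t : G.Walk y z} (hs : s.IsPath) (ht : t.IsPath)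
    (hcap : ∀ m ∈ s.support, m ∈ t.support → m = y) : (s.append t).IsPath := by
  rw [Walk.isPath_def, Walk.support_append, List.nodup_append]
  have hty := ht.support_nodup
  rw [t.support_eq_cons, List.nodup_cons] at hty
  refine ⟨hs.support_nodup, hty.2, ?_⟩
  rintro m hms _ hmt rfl
  have : m = y := hcap m hms (t.support_eq_cons ▸ List.mem_cons_of_mem _ hmt)
  exact hty.1 (this ▸ hmt)

private lemma one_le_length_of_ne {V : Type*} {G : SimpleGraph V} {x y : V}
    (q : G.Walk x y) (h : x ≠ y) : 1 ≤ q.length := by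
  rcases Nat.eq_zero_or_pos q.length with h0 | h1
  · exact absurd (Walk.eq_of_length_eq_zero h0) h
  · exact h1

private lemma climb {V : Type*} [DecidableEq V] {G : SimpleGraph V} (hac : G.IsAcyclic)
    {r x0 y0 α β : V} {p : G.Walk x0 y0} {QQ : G.Walk α β} (hQQ : QQ.IsPath)
    (hrooted : ∀ m ∈ QQ.support, ∀ (q : G.Walk r m), q.IsPath → α ∈ q.support)
    (hnonroot : ∀ e ∈ p.edges, e ∈ QQ.edges → α ∉ e)
    {c : G.Walk r α} (hc : c.IsPath)
    (hqpath : ∀ (x : V) (hx : x ∈ QQ.support), (c.append (QQ.takeUntil x hx)).IsPath) :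
    ∀ {z w : V} (q : G.Walk z w) (a : G.Walk r w),
      (a.append q.reverse).IsPath → (∀ e ∈ q.edges, e ∈ p.edges) →
      ((∃ e ∈ q.edges, e ∈ QQ.edges) ∨
        (z ∈ QQ.support ∧ z ≠ α ∧ ∃ e, e ∈ p.edges ∧ e ∈ QQ.edges ∧ z ∈ e)) →
      ∃ e, e ∈ p.edges ∧ e ∈ QQ.edges ∧ w ∈ e := by
  intro z w q
  induction q with
  | nil =>
    intro a _ _ hcase
    rcases hcase with ⟨e, he, _⟩ | ⟨_, _, e, h1, h2, h3⟩
    · simp at he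
    · exact ⟨e, h1, h2, h3⟩
  | @cons z y w' h q' ih =>
    intro a hq hsub hcase
    have hq' : (a.append q'.reverse).IsPath := by
      rw [Walk.reverse_cons, Walk.append_assoc] at hq
      exact hq.of_append_left
    have hsub' : ∀ e ∈ q'.edges, e ∈ p.edges := by
      intro e he; exact hsub e (by rw [Walk.edges_cons]; exact List.mem_cons_of_mem _ he)
    have hzy_p : s(z, y) ∈ p.edges :=
      hsub _ (by rw [Walk.edges_cons]; exact List.mem_cons_self)
    have step : s(z, y) ∈ QQ.edges → ∃ e, e ∈ p.edges ∧ e ∈ QQ.edges ∧ w' ∈ e := by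
      intro hzyQ
      have hAnot : α ∉ s(z, y) := hnonroot _ hzy_p hzyQ
      refine ih a hq' hsub' (Or.inr ⟨QQ.snd_mem_support_of_mem_edges hzyQ, ?_,
        s(z, y), hzy_p, hzyQ, Sym2.mem_mk_right z y⟩)
      intro hyA
      exact hAnot (hyA ▸ Sym2.mem_mk_right z y)
    rcases hcase with ⟨e, he, heQ⟩ | ⟨hzQ, hzA, _⟩
    · rw [Walk.edges_cons] at he
      rcases List.mem_cons.mp he with rfl | he'
      · exact step heQ
      · exact ih a hq' hsub' (Or.inl ⟨e, he', heQ⟩)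
    · have htake := hqpath z hzQ
      have heqw : a.append (Walk.cons h q').reverse = c.append (QQ.takeUntil z hzQ) :=
        walk_unique hac _ _ hq htake
      have hmem : s(z, y) ∈ (a.append (Walk.cons h q').reverse).edges := by
        rw [Walk.edges_append, Walk.edges_reverse]
        apply List.mem_append_right
        rw [List.mem_reverse, Walk.edges_cons]
        exact List.mem_cons_self
      rw [heqw, Walk.edges_append] at hmem
      rcases List.mem_append.mp hmem with hmc | hmq
      · exfalso
        have hzc : z ∈ c.support := c.fst_mem_support_of_mem_edges hmc
        have hA : α ∈ (c.takeUntil z hzc).support :=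
          hrooted z hzQ _ (hc.takeUntil hzc)
        have : α = z :=
          junction_of_mem (s := c.takeUntil z hzc) (t := c.dropUntil z hzc)
            (by rw [c.take_spec hzc]; exact hc) hA (Walk.end_mem_support _)
        exact hzA this.symm
      · exact step (QQ.edges_takeUntil_subset hzQ hmq)

theorem stmt4 {V : Type*} [Fintype V] (G : SimpleGraph V) (hT : G.IsTree) (r : V)
    (k : ℕ) (A B : Fin k → V) (Q : ∀ i, G.Walk (A i) (B i))
    (hpath : ∀ i, (Q i).IsPath)
    (hpartition : ∀ e ∈ G.edgeSet, ∃! i, e ∈ (Q i).edges)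
    (hrooted : ∀ i, ∀ w ∈ (Q i).support, ∀ (q : G.Walk r w), q.IsPath → A i ∈ q.support)
    (u v : V) (huv : u ≠ v) (p : G.Walk u v) (hp : p.IsPath)
    (i : Fin k)
    (hiedge : ∃ e, e ∈ p.edges ∧ e ∈ (Q i).edges)
    (hinonrooted : ∀ e ∈ p.edges, e ∈ (Q i).edges → A i ∉ e)
    -- `w` is the least common ancestor of `u` and `v`
    (w : V) (pru : G.Walk r u) (hpru : pru.IsPath) (prv : G.Walk r v) (hprv : prv.IsPath)
    (hw : w ∈ pru.support ∧ w ∈ prv.support ∧ w ∈ p.support) :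
    w ∈ (Q i).support ∧ w ≠ A i ∧ w ≠ B i := by
  classical
  obtain ⟨hwu, hwv, hwp⟩ := hw
  have hac := hT.IsAcyclic
  -- canonical path r → A i
  obtain ⟨c0⟩ := hT.isConnected.preconnected r (A i)
  set c : G.Walk r (A i) := c0.toPath.1 with hcdef
  have hc : c.IsPath := c0.toPath.2
  -- decompose pru at w
  set a : G.Walk r w := pru.takeUntil w hwu with hadef
  set t₁ : G.Walk w u := pru.dropUntil w hwu with ht1def
  have ha : a.IsPath := hpru.takeUntil hwu
  have ht₁ : t₁.IsPath := hpru.dropUntil hwu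
  have hpru_eq : a.append t₁ = pru := pru.take_spec hwu
  -- decompose prv at w
  set t₂ : G.Walk w v := prv.dropUntil w hwv with ht2def
  have ht₂ : t₂.IsPath := hprv.dropUntil hwv
  have haa' : prv.takeUntil w hwv = a :=
    walk_unique hac _ _ (hprv.takeUntil hwv) ha
  have hprv_eq : a.append t₂ = prv := by
    rw [← haa']; exact prv.take_spec hwv
  -- p = t₁.reverse ++ t₂
  have hpi1 : p.takeUntil w hwp = t₁.reverse :=
    walk_unique hac _ _ (hp.takeUntil hwp) ht₁.reverse
  have hpi2 : p.dropUntil w hwp = t₂ :=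
    walk_unique hac _ _ (hp.dropUntil hwp) ht₂
  have hpeq : p = t₁.reverse.append t₂ := by
    conv_lhs => rw [← p.take_spec hwp]
    rw [hpi1, hpi2]
  -- prefixing with c gives the r-path for vertices of Q i
  have qpath : ∀ (x : V) (t : G.Walk (A i) x), t.IsPath →
      (∀ m ∈ t.support, m ∈ (Q i).support) → (c.append t).IsPath := by
    intro x t ht hsub
    apply path_append hc ht
    intro m hmc hmt
    by_contra hne
    have hA : A i ∈ (c.takeUntil m hmc).support :=
      hrooted i m (hsub m hmt) _ (hc.takeUntil hmc)
    have : A i = m := by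
      apply junction_of_mem (s := c.takeUntil m hmc) (t := c.dropUntil m hmc)
        (by rw [c.take_spec hmc]; exact hc) hA (Walk.end_mem_support _)
    exact hne this.symm
  have hqpath : ∀ (x : V) (hx : x ∈ (Q i).support),
      (c.append ((Q i).takeUntil x hx)).IsPath := fun x hx =>
    qpath x _ ((hpath i).takeUntil hx) (fun m hm => (Q i).support_takeUntil_subset hx hm)
  -- set up the initial shared edge and apply climb on the correct side
  obtain ⟨e0, he0p, he0Q⟩ := hiedge
  have hsplit : e0 ∈ t₁.reverse.edges ∨ e0 ∈ t₂.edges := by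
    have := he0p
    rw [hpeq, Walk.edges_append] at this
    exact List.mem_append.mp this
  have hkey : ∃ e, e ∈ p.edges ∧ e ∈ (Q i).edges ∧ w ∈ e := by
    rcases hsplit with h1 | h2
    · refine climb hac (hpath i) (hrooted i) hinonrooted hc hqpath t₁.reverse a
        ?_ ?_ (Or.inl ⟨e0, h1, he0Q⟩)
      · rw [Walk.reverse_reverse, hpru_eq]; exact hpru
      · intro e he
        rw [hpeq, Walk.edges_append]
        exact List.mem_append_left _ he
    · refine climb hac (hpath i) (hrooted i) hinonrooted hc hqpath t₂.reverse a
        ?_ ?_ (Or.inl ⟨e0, by rwa [Walk.edges_reverse, List.mem_reverse], he0Q⟩)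
      · rw [Walk.reverse_reverse, hprv_eq]; exact hprv
      · intro e he
        rw [Walk.edges_reverse, List.mem_reverse] at he
        rw [hpeq, Walk.edges_append]
        exact List.mem_append_right _ he
  obtain ⟨e, hep, heQ, hwe⟩ := hkey
  obtain ⟨z, rfl⟩ := Sym2.mem_iff_exists.mp hwe
  have hwQ : w ∈ (Q i).support := (Q i).fst_mem_support_of_mem_edges heQ
  have hwA : w ≠ A i := by
    intro hh
    exact hinonrooted _ hep heQ (hh ▸ Sym2.mem_mk_left w z)
  refine ⟨hwQ, hwA, ?_⟩
  -- suppose w = B i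
  intro hwB
  have hzQ : z ∈ (Q i).support := (Q i).snd_mem_support_of_mem_edges heQ
  have hzw : z ≠ w := (G.ne_of_adj (p.adj_of_mem_edges hep)).symm
  -- r-path to z via Q i
  have hQz : (c.append ((Q i).takeUntil z hzQ)).IsPath := hqpath z hzQ
  -- r-path to w (= B i) via Q i
  have hQfull : (c.append (Q i)).IsPath := qpath (B i) (Q i) (hpath i) (fun m hm => hm)
  -- a transported to endpoint B i
  have haB : (a.copy rfl hwB).IsPath := (Walk.isPath_copy a rfl hwB).mpr ha
  have haQ : a.copy rfl hwB = c.append (Q i) := walk_unique hac _ _ haB hQfull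
  have halen : a.length = c.length + (Q i).length := by
    have := congrArg Walk.length haQ
    rwa [Walk.length_copy, Walk.length_append] at this
  -- r-path to z via p side
  have hrz : ∃ s : G.Walk r z, s.IsPath ∧ a.length + 1 ≤ s.length := by
    have hgen : ∀ (x : V) (t : G.Walk w x), (a.append t).IsPath → z ∈ t.support →
        ∃ s : G.Walk r z, s.IsPath ∧ a.length + 1 ≤ s.length := by
      intro x t hpt hzt
      refine ⟨a.append (t.takeUntil z hzt), ?_, ?_⟩
      · rw [← t.take_spec hzt, Walk.append_assoc] at hpt
        exact hpt.of_append_left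
      · rw [Walk.length_append]
        have := one_le_length_of_ne (t.takeUntil z hzt) (Ne.symm hzw)
        omega
    have hep' := hep
    rw [hpeq, Walk.edges_append] at hep'
    rcases List.mem_append.mp hep' with h1 | h2
    · rw [Walk.edges_reverse, List.mem_reverse] at h1
      exact hgen u t₁ (by rw [hpru_eq]; exact hpru) (t₁.snd_mem_support_of_mem_edges h1)
    · exact hgen v t₂ (by rw [hprv_eq]; exact hprv) (t₂.snd_mem_support_of_mem_edges h2)
  obtain ⟨s, hs, hslen⟩ := hrz
  have hseq : s = c.append ((Q i).takeUntil z hzQ) := walk_unique hac _ _ hs hQz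
  have hsl : s.length = c.length + ((Q i).takeUntil z hzQ).length := by
    rw [hseq, Walk.length_append]
  have hle := (Q i).length_takeUntil_le hzQ
  omega
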